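/- No gonosomal algebra is alternative: for any gonosomal algebra A of type (n,ν) over K, it is not the case that both x²y = x(xy) and yx² = (yx)x hold for all x, y ∈ A. -/

import Mathlib

/-- No gonosomal algebra is alternative: it is not the case that both
`x²y = x(xy)` and `yx² = (yx)x` hold for all `x, y`. -/
theorem gonosomal_not_alternative
    {K : Type*} [Field K] (hchar : ringChar K ≠ 2)
    {n ν : ℕ} (hn : 1 ≤ n) (hν : 1 ≤ ν)
    {A : Type*} [AddCommGroup A] [Module K A]
    (mul : A →ₗ[K] A →ₗ[K] A)
    (b : Module.Basis (Fin n ⊕ Fin ν) K A)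
    (γ : Fin n → Fin ν → Fin n → K) (γt : Fin n → Fin ν → Fin ν → K)
    (hee : ∀ i j : Fin n, mul (b (Sum.inl i)) (b (Sum.inl j)) = 0)
    (hff : ∀ p q : Fin ν, mul (b (Sum.inr p)) (b (Sum.inr q)) = 0)
    (hef : ∀ (i : Fin n) (p : Fin ν),
      mul (b (Sum.inl i)) (b (Sum.inr p)) =
        (∑ k, γ i p k • b (Sum.inl k)) + (∑ r, γt i p r • b (Sum.inr r)))
    (hfe : ∀ (i : Fin n) (p : Fin ν),
      mul (b (Sum.inr p)) (b (Sum.inl i)) = mul (b (Sum.inl i)) (b (Sum.inr p)))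
    (hsum : ∀ (i : Fin n) (p : Fin ν),
      (∑ k, γ i p k) + (∑ r, γt i p r) = 1) :
    ¬ ((∀ x y : A, mul (mul x x) y = mul x (mul x y)) ∧
       (∀ x y : A, mul y (mul x x) = mul (mul y x) x)) := by
  rintro ⟨hL, hR⟩
  set i0 : Fin n := ⟨0, hn⟩
  set p0 : Fin ν := ⟨0, hν⟩
  set e := b (Sum.inl i0) with he
  set f := b (Sum.inr p0) with hf
  -- the sum-of-coordinates linear functional
  set φ : A →ₗ[K] K := ∑ j, b.coord j with hφ
  have hφb : ∀ j, φ (b j) = 1 := by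
    intro j
    rw [hφ]
    simp only [LinearMap.sum_apply, Module.Basis.coord_apply, Module.Basis.repr_self,
      Finsupp.single_apply]
    rw [Finset.sum_ite_eq]
    simp
  have hφef : ∀ (i : Fin n) (p : Fin ν),
      φ (mul (b (Sum.inl i)) (b (Sum.inr p))) = 1 := by
    intro i p
    rw [hef]
    simp only [map_add, map_sum, map_smul, hφb, smul_eq_mul, mul_one]
    exact hsum i p
  -- from left alternativity with x = e, y = f : e(ef) = (ee)f = 0
  have h1 : mul e (mul e f) = 0 := by
    have := hL e f
    rw [he, hee, map_zero, LinearMap.zero_apply] at this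
    exact this.symm
  -- from right alternativity with x = f, y = e : (ef)f = e(ff) = 0
  have h2 : mul (mul e f) f = 0 := by
    have := hR f e
    rw [hf, hff, map_zero] at this
    exact this.symm
  -- expand e(ef)
  have key1 : (∑ r, γt i0 p0 r) = 0 := by
    have expand : mul e (mul e f) = ∑ r, γt i0 p0 r • mul e (b (Sum.inr r)) := by
      conv_lhs => rw [he, hf, hef i0 p0]
      simp only [map_add, map_sum, map_smul, ← he]
      rw [he]
      simp only [hee, smul_zero, Finset.sum_const_zero, zero_add]
    have := congrArg φ expand
    rw [h1, map_zero] at this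
    rw [map_sum] at this
    simp only [map_smul, he, hφef, smul_eq_mul, mul_one] at this
    exact this.symm
  have key2 : (∑ k, γ i0 p0 k) = 0 := by
    have expand : mul (mul e f) f = ∑ k, γ i0 p0 k • mul (b (Sum.inl k)) f := by
      conv_lhs => rw [he, hf, hef i0 p0]
      simp only [map_add, map_sum, map_smul, LinearMap.add_apply,
        LinearMap.sum_apply, LinearMap.smul_apply, ← hf]
      rw [hf]
      simp only [hff, smul_zero, Finset.sum_const_zero, add_zero]
    have := congrArg φ expand
    rw [h2, map_zero] at this
    rw [map_sum] at this
    simp only [map_smul, hf, hφef, smul_eq_mul, mul_one] at this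
    exact this.symm
  have := hsum i0 p0
  rw [key1, key2, add_zero] at this
  exact zero_ne_one this
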